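/- Let f be a monotone submodular function with f(∅) ≥ 0, let A ⊆ Ω be a set containing T and containing an earlier snapshot T' ⊆ A (with T' ⊆ A), and suppose u ∉ A. If the best single-swap gain Δ(u, T') = max_{y ∈ T'} [f(T' ∪ {u} \ {y}) − f(T')] satisfies Δ(u, T') < (α/k)·f(T') and f(T') ≤ f(T), |T'| = k, then the marginal value satisfies f(A ∪ {u}) − f(A) ≤ ((α+1)/k)·f(T). -/

import Mathlib

def Submodular {Ω : Type*} [DecidableEq Ω] (f : Finset Ω → ℝ) : Prop :=
  ∀ S T : Finset Ω, S ⊆ T → ∀ x ∉ T, f (insert x T) - f T ≤ f (insert x S) - f S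

lemma sum_marginals {Ω : Type*} [DecidableEq Ω] (f : Finset Ω → ℝ)
    (hsub : Submodular f) :
    ∀ S : Finset Ω, ∑ y ∈ S, (f S - f (S.erase y)) ≤ f S - f ∅ := by
  intro S
  induction S using Finset.induction_on with
  | empty => simp
  | insert _ _ ha =>
    rename_i a S' ih
    rw [Finset.sum_insert ha, Finset.erase_insert ha]
    have hterm : ∀ y ∈ S', f (insert a S') - f ((insert a S').erase y)
        ≤ f S' - f (S'.erase y) := by
      intro y hy
      have hya : y ≠ a := by rintro rfl; exact ha hy
      have herase : (insert a S').erase y = insert a (S'.erase y) := by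
        rw [Finset.erase_insert_of_ne hya.symm]
      have hyn : y ∉ insert a (S'.erase y) := by
        simp [hya, Finset.notMem_erase]
      have := hsub (S'.erase y) (insert a (S'.erase y))
        (Finset.subset_insert _ _) y hyn
      rw [Finset.insert_erase hy] at this
      rw [herase]
      calc f (insert a S') - f (insert a (S'.erase y))
          = f (insert y (insert a (S'.erase y))) - f (insert a (S'.erase y)) := by
            rw [Finset.insert_comm, Finset.insert_erase hy]
        _ ≤ f S' - f (S'.erase y) := this
    have hsum : ∑ y ∈ S', (f (insert a S') - f ((insert a S').erase y))
        ≤ ∑ y ∈ S', (f S' - f (S'.erase y)) := Finset.sum_le_sum hterm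
    have := ih
    linarith

theorem stmt_2 {Ω : Type*} [DecidableEq Ω] (f : Finset Ω → ℝ)
    (hsub : Submodular f) (hmono : Monotone f) (h0 : 0 ≤ f ∅)
    (α : ℝ) (hα : 0 < α) (k : ℕ) (hk : 0 < k)
    (A T T' : Finset Ω) (hT'A : T' ⊆ A) (hT'k : T'.card = k)
    (hT'ne : T'.Nonempty)
    (u : Ω) (hu : u ∉ A)
    (hΔ : T'.sup' hT'ne (fun y => f (insert u (T'.erase y)) - f T') < α / k * f T')
    (hTT' : f T' ≤ f T) :
    f (insert u A) - f A ≤ (α + 1) / k * f T := by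
  have hkR : (0:ℝ) < (k:ℝ) := by exact_mod_cast hk
  have hfT'0 : 0 ≤ f T' := le_trans h0 (hmono (Finset.empty_subset T'))
  -- find a good swap element
  have hsum : ∑ y ∈ T', (f T' - f (T'.erase y)) ≤ ∑ y ∈ T', (f T' / k) := by
    rw [Finset.sum_const, hT'k, nsmul_eq_mul]
    have : (k:ℝ) * (f T' / k) = f T' := by field_simp
    rw [this]
    have := sum_marginals f hsub T'
    linarith
  obtain ⟨y, hy, hygood⟩ := Finset.exists_le_of_sum_le hT'ne hsum
  have huT' : u ∉ T' := fun h => hu (hT'A h)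
  -- step 1: restrict to T'
  have h1 : f (insert u A) - f A ≤ f (insert u T') - f T' := hsub T' A hT'A u hu
  -- step 2: swap lemma pieces
  have hyu : y ≠ u := fun h => hu (hT'A (h ▸ hy))
  have hyn : y ∉ insert u (T'.erase y) := by simp [hyu, Finset.notMem_erase]
  have h2 : f (insert u T') - f (insert u (T'.erase y)) ≤ f T' - f (T'.erase y) := by
    have := hsub (T'.erase y) (insert u (T'.erase y)) (Finset.subset_insert _ _) y hyn
    rw [Finset.insert_erase hy] at this
    calc f (insert u T') - f (insert u (T'.erase y))
        = f (insert y (insert u (T'.erase y))) - f (insert u (T'.erase y)) := by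
          rw [Finset.insert_comm, Finset.insert_erase hy]
      _ ≤ f T' - f (T'.erase y) := this
  have h3 : f (insert u (T'.erase y)) - f T'
      ≤ T'.sup' hT'ne (fun y => f (insert u (T'.erase y)) - f T') :=
    Finset.le_sup' (fun y => f (insert u (T'.erase y)) - f T') hy
  have hmul : (α + 1) / k * f T' ≤ (α + 1) / k * f T :=
    mul_le_mul_of_nonneg_left hTT' (by positivity)
  have heq : (α + 1) / k * f T' = α / k * f T' + f T' / k := by
    field_simp
  linarith
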